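/- In the non-zero-sum malware detection game Γ, the set of Defender maximin strategies equals the set of Defender Strong Stackelberg Equilibrium strategies: a Defender mixed strategy ρ* is a maximin strategy (inf over all Attacker mixed strategies μ of U_d(ρ*,μ) is maximal among all Defender mixed strategies) if and only if ρ* is an SSE strategy, i.e. sup over μ ∈ BR(ρ*) of U_d(ρ*,μ) is ≥ sup over μ ∈ BR(ρ) of U_d(ρ,μ) for every Defender mixed strategy ρ, where BR(ρ) is the Attacker's best-response set to ρ under the utility U_a^{Γ}(ρ,μ) = Ξ·S(ρ,μ). -/

import Mathlib

open Finset Set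

/-- Expected security damage bilinear form `S(ρ,μ) = Σ_{j,l} ρ j · μ l · S j l`. -/
def Sbil {R M : ℕ} (S : Fin R → Fin M → ℝ) (ρ : Fin R → ℝ) (μ : Fin M → ℝ) : ℝ :=
  ∑ j, ∑ l, ρ j * μ l * S j l

/-- Expected inspection cost `k(ρ) = Σ_j ρ j · C j`. -/
def kcost {R : ℕ} (C : Fin R → ℝ) (ρ : Fin R → ℝ) : ℝ :=
  ∑ j, ρ j * C j

/-- Defender expected utility `U_d(ρ,μ) = -S(ρ,μ) - k(ρ)` (same in `Γ₀` and `Γ`). -/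
def Ud {R M : ℕ} (S : Fin R → Fin M → ℝ) (C : Fin R → ℝ) (ρ : Fin R → ℝ)
    (μ : Fin M → ℝ) : ℝ :=
  -Sbil S ρ μ - kcost C ρ

/-- Mixed Nash equilibrium of the zero-sum game `Γ₀`, where the Attacker's
utility is `U_a^{Γ₀}(ρ,μ) = -U_d(ρ,μ)`. -/
def NEzero {R M : ℕ} (S : Fin R → Fin M → ℝ) (C : Fin R → ℝ) (ρs : Fin R → ℝ)
    (μs : Fin M → ℝ) : Prop :=
  ρs ∈ stdSimplex ℝ (Fin R) ∧ μs ∈ stdSimplex ℝ (Fin M) ∧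
  (∀ ρ ∈ stdSimplex ℝ (Fin R), Ud S C ρs μs ≥ Ud S C ρ μs) ∧
  (∀ μ ∈ stdSimplex ℝ (Fin M), -Ud S C ρs μs ≥ -Ud S C ρs μ)

/-- Mixed Nash equilibrium of the non-zero-sum game `Γ`, where the Attacker's
utility is `U_a^{Γ}(ρ,μ) = Ξ·S(ρ,μ)`. -/
def NEgame {R M : ℕ} (S : Fin R → Fin M → ℝ) (C : Fin R → ℝ) (Ξ : ℝ)
    (ρs : Fin R → ℝ) (μs : Fin M → ℝ) : Prop :=
  ρs ∈ stdSimplex ℝ (Fin R) ∧ μs ∈ stdSimplex ℝ (Fin M) ∧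
  (∀ ρ ∈ stdSimplex ℝ (Fin R), Ud S C ρs μs ≥ Ud S C ρ μs) ∧
  (∀ μ ∈ stdSimplex ℝ (Fin M), Ξ * Sbil S ρs μs ≥ Ξ * Sbil S ρs μ)

/-- Maximin strategy of the Defender. -/
def Maximin {R M : ℕ} (S : Fin R → Fin M → ℝ) (C : Fin R → ℝ)
    (ρd : Fin R → ℝ) : Prop :=
  ρd ∈ stdSimplex ℝ (Fin R) ∧
  ∀ ρ ∈ stdSimplex ℝ (Fin R),
    sInf ((Ud S C ρd) '' stdSimplex ℝ (Fin M)) ≥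
      sInf ((Ud S C ρ) '' stdSimplex ℝ (Fin M))

/-- The Attacker's best-response set to `ρ` in the non-zero-sum game `Γ`. -/
def BRset {R M : ℕ} (S : Fin R → Fin M → ℝ) (Ξ : ℝ) (ρ : Fin R → ℝ) :
    Set (Fin M → ℝ) :=
  {μ | μ ∈ stdSimplex ℝ (Fin M) ∧
    ∀ μ' ∈ stdSimplex ℝ (Fin M), Ξ * Sbil S ρ μ ≥ Ξ * Sbil S ρ μ'}

/-- Strong Stackelberg Equilibrium strategy of the Defender in `Γ`. -/
def SSEstrat {R M : ℕ} (S : Fin R → Fin M → ℝ) (C : Fin R → ℝ) (Ξ : ℝ)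
    (ρs : Fin R → ℝ) : Prop :=
  ρs ∈ stdSimplex ℝ (Fin R) ∧
  ∀ ρ ∈ stdSimplex ℝ (Fin R),
    sSup ((Ud S C ρs) '' BRset S Ξ ρs) ≥ sSup ((Ud S C ρ) '' BRset S Ξ ρ)


lemma exists_max' {R M : ℕ} (hM : 0 < M) (S : Fin R → Fin M → ℝ) (ρ : Fin R → ℝ) :
    ∃ μm ∈ stdSimplex ℝ (Fin M), ∀ μ ∈ stdSimplex ℝ (Fin M), Sbil S ρ μ ≤ Sbil S ρ μm := by
  have hcont : Continuous (Sbil S ρ) := by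
    unfold Sbil
    exact continuous_finset_sum _ fun j _ => continuous_finset_sum _ fun l _ =>
      ((continuous_const.mul (continuous_apply l)).mul continuous_const)
  have hne : (stdSimplex ℝ (Fin M)).Nonempty :=
    ⟨_, single_mem_stdSimplex ℝ (⟨0, hM⟩ : Fin M)⟩
  obtain ⟨μm, hmem, hmax⟩ := (isCompact_stdSimplex ℝ (Fin M)).exists_isMaxOn hne hcont.continuousOn
  exact ⟨μm, hmem, fun μ hμ => hmax hμ⟩

lemma key' {R M : ℕ} (hM : 0 < M) (S : Fin R → Fin M → ℝ) (C : Fin R → ℝ)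
    (Ξ : ℝ) (hΞ : 0 < Ξ) (ρ : Fin R → ℝ) :
    sSup ((Ud S C ρ) '' BRset S Ξ ρ) = sInf ((Ud S C ρ) '' stdSimplex ℝ (Fin M)) := by
  obtain ⟨μm, hmem, hmax⟩ := exists_max' hM S ρ
  have hBRm : μm ∈ BRset S Ξ ρ :=
    ⟨hmem, fun μ' hμ' => mul_le_mul_of_nonneg_left (hmax μ' hμ') hΞ.le⟩
  have himg : Ud S C ρ '' BRset S Ξ ρ = {Ud S C ρ μm} := by
    ext x; constructor
    · rintro ⟨μ, ⟨hμs, hbr⟩, rfl⟩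
      have h1 : Sbil S ρ μ = Sbil S ρ μm :=
        le_antisymm (hmax μ hμs) (le_of_mul_le_mul_left (hbr μm hmem) hΞ)
      simp [Ud, h1]
    · rintro rfl; exact ⟨μm, hBRm, rfl⟩
  rw [himg, csSup_singleton]
  have hlb : ∀ x ∈ Ud S C ρ '' stdSimplex ℝ (Fin M), Ud S C ρ μm ≤ x := by
    rintro x ⟨μ, hμ, rfl⟩
    have := hmax μ hμ
    simp only [Ud]; linarith
  exact le_antisymm (le_csInf ⟨_, ⟨μm, hmem, rfl⟩⟩ hlb) (csInf_le ⟨_, hlb⟩ ⟨μm, hmem, rfl⟩)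

/-- in `Γ`, the Defender's maximin strategies are exactly her
Strong Stackelberg Equilibrium strategies. -/
theorem stmt3 {R M : ℕ} (hR : 0 < R) (hM : 0 < M)
    (S : Fin R → Fin M → ℝ) (hS : ∀ j l, 0 ≤ S j l)
    (C : Fin R → ℝ) (hC : ∀ j, 0 ≤ C j)
    (Ξ : ℝ) (hΞ : 0 < Ξ)
    (ρs : Fin R → ℝ) :
    Maximin S C ρs ↔ SSEstrat S C Ξ ρs := by
  constructor
  · rintro ⟨hmem, h⟩
    refine ⟨hmem, fun ρ hρ => ?_⟩
    rw [key' hM S C Ξ hΞ ρs, key' hM S C Ξ hΞ ρ]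
    exact h ρ hρ
  · rintro ⟨hmem, h⟩
    refine ⟨hmem, fun ρ hρ => ?_⟩
    have := h ρ hρ
    rwa [key' hM S C Ξ hΞ ρs, key' hM S C Ξ hΞ ρ] at this
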